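/- Let n ≥ 2 and K ≥ 1, and let M_1, …, M_n be real symmetric d×d matrices. There exist a constant C ≥ 0 and η_0 > 0 (depending on n, K, and the M_i) such that for every η ∈ [0, η_0], the matrices A_i := I − η M_i satisfy W_RS(n,K,A_1,…,A_n) − W_SS(n,K,A_1,…,A_n) ⪰ −(η^4 K(K−1)/(4n·n!)) Σ_{i,j ∈ [n], i ≠ j} (M_i M_j − M_j M_i)^2 − C η^5 I. -/

import Mathlib

/-- Spectral norm (operator 2-norm) of a real square matrix. -/
noncomputable def specNorm {d : ℕ} (A : Matrix (Fin d) (Fin d) ℝ) : ℝ :=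
  ‖Matrix.toEuclideanCLM (𝕜 := ℝ) A‖

/-- Ordered product `A (σ 1) * A (σ 2) * ⋯ * A (σ n)` (increasing index order). -/
noncomputable def permProd {n d : ℕ} (A : Fin n → Matrix (Fin d) (Fin d) ℝ)
    (σ : Equiv.Perm (Fin n)) : Matrix (Fin d) (Fin d) ℝ :=
  (List.ofFn fun i => A (σ i)).prod

/-- Single-shuffle mean: `(1/n!) Σ_σ (Π_i A_{σ(i)})^K`. -/
noncomputable def WSS (n K : ℕ) {d : ℕ} (A : Fin n → Matrix (Fin d) (Fin d) ℝ) :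
    Matrix (Fin d) (Fin d) ℝ :=
  ((n.factorial : ℝ)⁻¹) • ∑ σ : Equiv.Perm (Fin n), (permProd A σ) ^ K

/-- Random-reshuffle mean: `((1/n!) Σ_σ Π_i A_{σ(i)})^K`. -/
noncomputable def WRS (n K : ℕ) {d : ℕ} (A : Fin n → Matrix (Fin d) (Fin d) ℝ) :
    Matrix (Fin d) (Fin d) ℝ :=
  (((n.factorial : ℝ)⁻¹) • ∑ σ : Equiv.Perm (Fin n), permProd A σ) ^ K

/-- GD mean: `((1/n) Σ_i A_i)^(nK)`. -/
noncomputable def WGD (n K : ℕ) {d : ℕ} (A : Fin n → Matrix (Fin d) (Fin d) ℝ) :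
    Matrix (Fin d) (Fin d) ℝ :=
  (((n : ℝ)⁻¹) • ∑ i : Fin n, A i) ^ (n * K)

open scoped Matrix.Norms.L2Operator
open Matrix


namespace St4







variable {n d : ℕ}

/-- sum over ordered pairs i<j of products -/
noncomputable def pairS : List (Matrix (Fin d) (Fin d) ℝ) → Matrix (Fin d) (Fin d) ℝ
  | [] => 0
  | B :: l => B * l.sum + pairS l

lemma pairS_ofFn : ∀ {k : ℕ} (f : Fin k → Matrix (Fin d) (Fin d) ℝ),
    pairS (List.ofFn f) = ∑ i : Fin k, ∑ j : Fin k, if i < j then f i * f j else 0 := by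
  intro k
  induction k with
  | zero => intro f; simp [pairS]
  | succ m ih =>
    intro f
    rw [List.ofFn_succ]
    show f 0 * (List.ofFn fun i => f i.succ).sum + pairS (List.ofFn fun i => f i.succ) = _
    rw [ih, List.sum_ofFn]
    rw [Fin.sum_univ_succ (f := fun i => ∑ j, if i < j then f i * f j else 0)]
    congr 1
    · -- f 0 * ∑ = ∑ j, if 0 < j then f 0 * f j
      rw [Fin.sum_univ_succ (f := fun j => if (0:Fin (m+1)) < j then f 0 * f j else 0)]
      simp [Finset.mul_sum, Fin.succ_pos]
    · -- ∑ i ∑ j shifted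
      refine Finset.sum_congr rfl fun i _ => ?_
      rw [Fin.sum_univ_succ (f := fun j => if i.succ < j then f i.succ * f j else 0)]
      have h0 : ¬ (i.succ < (0 : Fin (m+1))) := by simp [Fin.lt_def]
      simp only [h0, if_neg, ite_false]
      rw [zero_add]
      refine Finset.sum_congr rfl fun j _ => ?_
      simp [Fin.succ_lt_succ_iff]







noncomputable def SSm (M : Fin n → Matrix (Fin d) (Fin d) ℝ) (σ : Equiv.Perm (Fin n)) :
    Matrix (Fin d) (Fin d) ℝ :=
  ∑ i : Fin n, ∑ j : Fin n, if i < j then M (σ i) * M (σ j) else 0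

lemma sum_sum_comp (e : Equiv.Perm (Fin n)) (f : Fin n → Fin n → Matrix (Fin d) (Fin d) ℝ) :
    ∑ i : Fin n, ∑ j : Fin n, f i j = ∑ i : Fin n, ∑ j : Fin n, f (e i) (e j) := by
  rw [← Equiv.sum_comp e (fun i => ∑ j, f i j)]
  exact Finset.sum_congr rfl fun i _ => (Equiv.sum_comp e (fun j => f (e i) j)).symm

/-- swap of two adjacent values changes SSm by a commutator -/
lemma SSm_swap (M : Fin n → Matrix (Fin d) (Fin d) ℝ) (σ : Equiv.Perm (Fin n))
    (a b : Fin n) (hadj : (a : ℕ) + 1 = (b : ℕ)) :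
    SSm M σ - SSm M (σ * Equiv.swap a b)
      = M (σ a) * M (σ b) - M (σ b) * M (σ a) := by
  have hab : a ≠ b := by
    intro h; rw [h] at hadj; omega
  set s := Equiv.swap a b with hs
  have h1 : SSm M (σ * s) = ∑ i : Fin n, ∑ j : Fin n,
      if s i < s j then M (σ i) * M (σ j) else 0 := by
    unfold SSm
    rw [sum_sum_comp s (fun i j => if i < j then M ((σ * s) i) * M ((σ * s) j) else 0)]
    refine Finset.sum_congr rfl fun i _ => Finset.sum_congr rfl fun j _ => ?_
    have hss : ∀ x, (σ * s) (s x) = σ x := by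
      intro x; simp [hs, Equiv.swap_apply_self]
    rw [hss, hss]
  rw [h1]
  unfold SSm
  rw [← Finset.sum_sub_distrib]
  simp only [← Finset.sum_sub_distrib]
  have key : ∀ i j : Fin n,
      ((if i < j then M (σ i) * M (σ j) else 0) -
        (if s i < s j then M (σ i) * M (σ j) else 0))
      = (if i = a then (if j = b then M (σ a) * M (σ b) else 0) else 0)
        - (if i = b then (if j = a then M (σ b) * M (σ a) else 0) else 0) := by
    intro i j
    simp only [hs, Equiv.swap_apply_def]
    split_ifs <;> subst_vars <;>
      first
        | (exfalso; simp only [Fin.lt_def, Fin.ext_iff, not_lt, ne_eq] at *; omega)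
        | simp
  rw [Finset.sum_congr rfl fun i _ => Finset.sum_congr rfl fun j _ => key i j]
  simp [Finset.sum_sub_distrib, Finset.sum_ite_eq']







lemma real_conjT (A : Matrix (Fin d) (Fin d) ℝ) : Aᴴ = Aᵀ := by
  ext i j; simp [Matrix.conjTranspose_apply]

lemma psd_sum {α : Type*} (s : Finset α) (f : α → Matrix (Fin d) (Fin d) ℝ)
    (h : ∀ a ∈ s, (f a).PosSemidef) : (∑ a ∈ s, f a).PosSemidef :=
  Finset.sum_induction f _ (fun _ _ ha hb => ha.add hb) Matrix.PosSemidef.zero h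

lemma psd_smul {c : ℝ} (hc : 0 ≤ c) {A : Matrix (Fin d) (Fin d) ℝ} (hA : A.PosSemidef) :
    (c • A).PosSemidef := by
  rw [Matrix.posSemidef_iff_dotProduct_mulVec]
  constructor
  · have := hA.1
    unfold Matrix.IsHermitian at *
    rw [Matrix.conjTranspose_smul]
    simp only [star_trivial]
    rw [this]
  · intro x
    rw [Matrix.smul_mulVec, dotProduct_smul]
    exact mul_nonneg hc (hA.dotProduct_mulVec_nonneg x)

lemma psd_self_mul_transpose (A : Matrix (Fin d) (Fin d) ℝ) : (A * Aᵀ).PosSemidef := by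
  rw [← real_conjT]; exact Matrix.posSemidef_self_mul_conjTranspose A

lemma psd_two_diff (X Y : Matrix (Fin d) (Fin d) ℝ) :
    ((2:ℝ) • (X * Xᵀ) + (2:ℝ) • (Y * Yᵀ) - (X - Y) * (X - Y)ᵀ).PosSemidef := by
  have h : (2:ℝ) • (X * Xᵀ) + (2:ℝ) • (Y * Yᵀ) - (X - Y) * (X - Y)ᵀ
      = (X + Y) * (X + Y)ᵀ := by
    simp only [Matrix.transpose_sub, Matrix.transpose_add, sub_mul, mul_sub, add_mul, mul_add,
      two_smul]
    abel
  rw [h]; exact psd_self_mul_transpose _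

lemma psd_sum_comp_le {β : Type*} (t : Finset β) (u : β → Equiv.Perm (Fin n))
    (hinj : ∀ x ∈ t, ∀ y ∈ t, u x = u y → x = y)
    (f : Equiv.Perm (Fin n) → Matrix (Fin d) (Fin d) ℝ) (hf : ∀ σ, (f σ).PosSemidef) :
    ((∑ σ : Equiv.Perm (Fin n), f σ) - ∑ p ∈ t, f (u p)).PosSemidef := by
  have h1 : ∑ p ∈ t, f (u p) = ∑ σ ∈ t.image u, f σ := (Finset.sum_image hinj).symm
  rw [h1, ← Finset.sum_sdiff_eq_sub (Finset.subset_univ _)]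
  exact psd_sum _ _ fun a _ => hf a

def i0 (hn : 2 ≤ n) : Fin n := ⟨0, by omega⟩
def i1 (hn : 2 ≤ n) : Fin n := ⟨1, by omega⟩

lemma i0_ne_i1 (hn : 2 ≤ n) : i0 hn ≠ i1 hn := by
  simp [i0, i1, Fin.ext_iff]

noncomputable def perm2 (hn : 2 ≤ n) (p : Fin n × Fin n) : Equiv.Perm (Fin n) :=
  Equiv.swap (i0 hn) p.1 * Equiv.swap (i1 hn) (Equiv.swap (i0 hn) p.1 p.2)

lemma perm2_0 (hn : 2 ≤ n) (p : Fin n × Fin n) (hp : p.1 ≠ p.2) :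
    perm2 hn p (i0 hn) = p.1 := by
  unfold perm2
  have hc : Equiv.swap (i0 hn) p.1 p.2 ≠ i0 hn := by
    intro h
    have := congrArg (Equiv.swap (i0 hn) p.1) h
    rw [Equiv.swap_apply_self, Equiv.swap_apply_left] at this
    exact hp this.symm
  rw [Equiv.Perm.mul_apply, Equiv.swap_apply_of_ne_of_ne (i0_ne_i1 hn) (Ne.symm hc),
    Equiv.swap_apply_left]

lemma perm2_1 (hn : 2 ≤ n) (p : Fin n × Fin n) : perm2 hn p (i1 hn) = p.2 := by
  unfold perm2
  rw [Equiv.Perm.mul_apply, Equiv.swap_apply_left, Equiv.swap_apply_self]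



noncomputable def Sbar (M : Fin n → Matrix (Fin d) (Fin d) ℝ) : Matrix (Fin d) (Fin d) ℝ :=
  ((n.factorial : ℝ))⁻¹ • ∑ σ : Equiv.Perm (Fin n), SSm M σ

noncomputable def Vm (M : Fin n → Matrix (Fin d) (Fin d) ℝ) (σ : Equiv.Perm (Fin n)) :
    Matrix (Fin d) (Fin d) ℝ := SSm M σ - Sbar M

noncomputable def G2 (M : Fin n → Matrix (Fin d) (Fin d) ℝ) : Matrix (Fin d) (Fin d) ℝ :=
  ((n.factorial : ℝ))⁻¹ • ∑ σ : Equiv.Perm (Fin n), (Vm M σ) ^ 2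

noncomputable def T0 (M : Fin n → Matrix (Fin d) (Fin d) ℝ) : Matrix (Fin d) (Fin d) ℝ :=
  ∑ i : Fin n, ∑ j : Fin n, if i ≠ j then M i * M j else 0

variable {M : Fin n → Matrix (Fin d) (Fin d) ℝ}

lemma factorial_inv_smul (X : Matrix (Fin d) (Fin d) ℝ) :
    ((n.factorial : ℝ))⁻¹ • ∑ _σ : Equiv.Perm (Fin n), X = X := by
  rw [Finset.sum_const, Finset.card_univ, Fintype.card_perm, Fintype.card_fin,
    ← Nat.cast_smul_eq_nsmul ℝ, smul_smul, inv_mul_cancel₀, one_smul]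
  exact_mod_cast n.factorial_ne_zero

lemma SSm_add_transpose (hsymm : ∀ i, (M i).IsSymm) (σ : Equiv.Perm (Fin n)) :
    SSm M σ + (SSm M σ)ᵀ = T0 M := by
  have ht : (SSm M σ)ᵀ = ∑ i : Fin n, ∑ j : Fin n,
      if j < i then M (σ i) * M (σ j) else 0 := by
    unfold SSm
    rw [Matrix.transpose_sum]
    rw [Finset.sum_comm]
    refine Finset.sum_congr rfl fun i _ => ?_
    rw [Matrix.transpose_sum]
    refine Finset.sum_congr rfl fun j _ => ?_
    rw [apply_ite Matrix.transpose, Matrix.transpose_zero, Matrix.transpose_mul,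
      (hsymm _).eq, (hsymm _).eq]
  rw [ht]
  unfold SSm
  rw [← Finset.sum_add_distrib]
  have h2 : (∑ i : Fin n, ∑ j : Fin n, if i ≠ j then M (σ i) * M (σ j) else 0) = T0 M := by
    unfold T0
    rw [sum_sum_comp σ (fun i j => if i ≠ j then M i * M j else 0)]
    refine Finset.sum_congr rfl fun i _ => Finset.sum_congr rfl fun j _ => ?_
    simp [Ne, EmbeddingLike.apply_eq_iff_eq]
  rw [← h2]
  refine Finset.sum_congr rfl fun i _ => ?_
  rw [← Finset.sum_add_distrib]
  refine Finset.sum_congr rfl fun j _ => ?_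
  rcases lt_trichotomy i j with h | h | h
  · simp [h, not_lt.2 h.le, h.ne]
  · simp [h]
  · simp [h, not_lt.2 h.le, h.ne', Ne.symm h.ne]

lemma Sbar_transpose (hsymm : ∀ i, (M i).IsSymm) : (Sbar M)ᵀ = T0 M - Sbar M := by
  unfold Sbar
  rw [Matrix.transpose_smul, Matrix.transpose_sum]
  have : ∑ σ : Equiv.Perm (Fin n), (SSm M σ)ᵀ
      = ∑ σ : Equiv.Perm (Fin n), (T0 M - SSm M σ) := by
    refine Finset.sum_congr rfl fun σ _ => ?_
    have := SSm_add_transpose hsymm σ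
    linear_combination (norm := abel) this
  rw [this, Finset.sum_sub_distrib, smul_sub, factorial_inv_smul]

lemma Vm_transpose (hsymm : ∀ i, (M i).IsSymm) (σ : Equiv.Perm (Fin n)) :
    (Vm M σ)ᵀ = - Vm M σ := by
  unfold Vm
  rw [Matrix.transpose_sub, Sbar_transpose hsymm]
  have := SSm_add_transpose hsymm σ
  linear_combination (norm := abel) this

lemma Vm_sq (hsymm : ∀ i, (M i).IsSymm) (σ : Equiv.Perm (Fin n)) :
    (Vm M σ) ^ 2 = -(Vm M σ * (Vm M σ)ᵀ) := by
  rw [Vm_transpose hsymm, mul_neg, sq]; rw [neg_neg]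

/-- commutator -/
noncomputable def Cm (M : Fin n → Matrix (Fin d) (Fin d) ℝ) (a b : Fin n) :
    Matrix (Fin d) (Fin d) ℝ := M a * M b - M b * M a

lemma Cm_eq_V_diff (hn : 2 ≤ n) (p : Fin n × Fin n) (hp : p.1 ≠ p.2) :
    Cm M p.1 p.2 = Vm M (perm2 hn p) - Vm M (perm2 hn p * Equiv.swap (i0 hn) (i1 hn)) := by
  unfold Vm
  rw [sub_sub_sub_cancel_right]
  have h := SSm_swap M (perm2 hn p) (i0 hn) (i1 hn) (by simp [i0, i1])
  rw [h, perm2_0 hn p hp, perm2_1 hn p]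
  rfl

lemma comb_psd (hn : 2 ≤ n) (hsymm : ∀ i, (M i).IsSymm) :
    ((4:ℝ) • (∑ σ : Equiv.Perm (Fin n), Vm M σ * (Vm M σ)ᵀ)
      - ∑ i : Fin n, ∑ j : Fin n,
          (if i ≠ j then Cm M i j * (Cm M i j)ᵀ else 0)).PosSemidef := by
  classical
  set f : Equiv.Perm (Fin n) → Matrix (Fin d) (Fin d) ℝ :=
    fun σ => Vm M σ * (Vm M σ)ᵀ with hfdef
  have hf : ∀ σ, (f σ).PosSemidef := fun σ => psd_self_mul_transpose _
  set t : Finset (Fin n × Fin n) := Finset.univ.filter (fun p => p.1 ≠ p.2) with htdef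
  have hmem : ∀ p ∈ t, p.1 ≠ p.2 := by
    intro p hp; exact (Finset.mem_filter.1 hp).2
  set u1 : Fin n × Fin n → Equiv.Perm (Fin n) := fun p => perm2 hn p with hu1
  set u2 : Fin n × Fin n → Equiv.Perm (Fin n) :=
    fun p => perm2 hn p * Equiv.swap (i0 hn) (i1 hn) with hu2
  have hu2v : ∀ p ∈ t, u2 p (i0 hn) = p.2 ∧ u2 p (i1 hn) = p.1 := by
    intro p hp
    constructor
    · rw [hu2]; simp only [Equiv.Perm.mul_apply, Equiv.swap_apply_left]
      exact perm2_1 hn p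
    · rw [hu2]; simp only [Equiv.Perm.mul_apply, Equiv.swap_apply_right]
      exact perm2_0 hn p (hmem p hp)
  have hinj1 : ∀ x ∈ t, ∀ y ∈ t, u1 x = u1 y → x = y := by
    intro x hx y hy h
    have h0 := congrArg (fun σ : Equiv.Perm (Fin n) => σ (i0 hn)) h
    have h1 := congrArg (fun σ : Equiv.Perm (Fin n) => σ (i1 hn)) h
    simp only [hu1] at h0 h1
    rw [perm2_0 hn x (hmem x hx), perm2_0 hn y (hmem y hy)] at h0
    rw [perm2_1 hn x, perm2_1 hn y] at h1
    exact Prod.ext h0 h1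
  have hinj2 : ∀ x ∈ t, ∀ y ∈ t, u2 x = u2 y → x = y := by
    intro x hx y hy h
    have h0 := congrArg (fun σ : Equiv.Perm (Fin n) => σ (i0 hn)) h
    have h1 := congrArg (fun σ : Equiv.Perm (Fin n) => σ (i1 hn)) h
    rw [(hu2v x hx).1, (hu2v y hy).1] at h0
    rw [(hu2v x hx).2, (hu2v y hy).2] at h1
    exact Prod.ext h1 h0
  set g : Fin n × Fin n → Matrix (Fin d) (Fin d) ℝ :=
    fun p => Cm M p.1 p.2 * (Cm M p.1 p.2)ᵀ with hgdef
  have hY : (∑ i : Fin n, ∑ j : Fin n,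
      (if i ≠ j then Cm M i j * (Cm M i j)ᵀ else 0)) = ∑ p ∈ t, g p := by
    rw [← Finset.sum_product', htdef, Finset.sum_filter]
    rw [Finset.univ_product_univ]
  have hdiff : ∀ p ∈ t, ((2:ℝ) • f (u1 p) + (2:ℝ) • f (u2 p) - g p).PosSemidef := by
    intro p hp
    have hC : Cm M p.1 p.2 = Vm M (u1 p) - Vm M (u2 p) :=
      Cm_eq_V_diff hn p (hmem p hp)
    have : g p = (Vm M (u1 p) - Vm M (u2 p)) * (Vm M (u1 p) - Vm M (u2 p))ᵀ := by
      rw [hgdef]; simp only [hC]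
    rw [this, hfdef]
    exact psd_two_diff _ _
  set X := ∑ σ : Equiv.Perm (Fin n), f σ with hX
  have hsplit : (4:ℝ) • X - ∑ p ∈ t, g p
      = (∑ p ∈ t, ((2:ℝ) • f (u1 p) + (2:ℝ) • f (u2 p) - g p))
        + ((2:ℝ) • (X - ∑ p ∈ t, f (u1 p)) + (2:ℝ) • (X - ∑ p ∈ t, f (u2 p))) := by
    rw [Finset.sum_sub_distrib, Finset.sum_add_distrib, ← Finset.smul_sum, ← Finset.smul_sum]
    module
  rw [hY, hsplit]
  exact (psd_sum _ _ hdiff).add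
    ((psd_smul (by norm_num) (psd_sum_comp_le t u1 hinj1 f hf)).add
      (psd_smul (by norm_num) (psd_sum_comp_le t u2 hinj2 f hf)))

lemma final_comb (K : ℕ) (hn : 2 ≤ n) (hK : 1 ≤ K) (hsymm : ∀ i, (M i).IsSymm) :
    (((K:ℝ) * ((K:ℝ) - 1) / (4 * (n:ℝ) * (n.factorial : ℝ))) •
        (∑ i : Fin n, ∑ j : Fin n, (if i ≠ j then (Cm M i j) ^ 2 else 0))
      - ((K:ℝ) * ((K:ℝ) - 1) / 2) • G2 M).PosSemidef := by
  classical
  have hKK : 0 ≤ (K:ℝ) * ((K:ℝ) - 1) := by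
    have h1 : (1:ℝ) ≤ (K:ℝ) := by exact_mod_cast hK
    nlinarith
  have hnR : (2:ℝ) ≤ (n:ℝ) := by exact_mod_cast hn
  have hn0 : (n:ℝ) ≠ 0 := by positivity
  have hf0 : (n.factorial : ℝ) ≠ 0 := by
    exact_mod_cast n.factorial_ne_zero
  set X := ∑ σ : Equiv.Perm (Fin n), Vm M σ * (Vm M σ)ᵀ with hXdef
  set Y := ∑ i : Fin n, ∑ j : Fin n,
      (if i ≠ j then Cm M i j * (Cm M i j)ᵀ else 0) with hYdef
  set lam := (K:ℝ) * ((K:ℝ) - 1) * ((n:ℝ) - 2) / (2 * (n:ℝ) * (n.factorial : ℝ)) with hlam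
  have hlam0 : 0 ≤ lam := by
    rw [hlam]
    apply div_nonneg
    · exact mul_nonneg hKK (by linarith)
    · positivity
  have hc0 : 0 ≤ (K:ℝ) * ((K:ℝ) - 1) / (4 * (n:ℝ) * (n.factorial : ℝ)) := by
    apply div_nonneg hKK
    positivity
  have hCt : ∀ i j, (Cm M i j)ᵀ = -(Cm M i j) := by
    intro i j
    unfold Cm
    rw [Matrix.transpose_sub, Matrix.transpose_mul, Matrix.transpose_mul,
      (hsymm i).eq, (hsymm j).eq]
    abel
  have hS4 : (∑ i : Fin n, ∑ j : Fin n, (if i ≠ j then (Cm M i j) ^ 2 else 0)) = -Y := by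
    rw [hYdef]
    have hptw : ∀ i j : Fin n, (if i ≠ j then (Cm M i j) ^ 2 else 0)
        = -(if i ≠ j then Cm M i j * (Cm M i j)ᵀ else 0) := by
      intro i j
      split_ifs
      · rw [hCt, mul_neg, neg_neg, sq]
      · simp
    calc (∑ i : Fin n, ∑ j : Fin n, (if i ≠ j then (Cm M i j) ^ 2 else 0))
        = ∑ i : Fin n, ∑ j : Fin n, -(if i ≠ j then Cm M i j * (Cm M i j)ᵀ else 0) :=
          Finset.sum_congr rfl fun i _ => Finset.sum_congr rfl fun j _ => hptw i j
      _ = -(∑ i : Fin n, ∑ j : Fin n, (if i ≠ j then Cm M i j * (Cm M i j)ᵀ else 0)) := by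
          simp [Finset.sum_neg_distrib]
  have hG2 : G2 M = -(((n.factorial : ℝ))⁻¹ • X) := by
    unfold G2
    rw [← smul_neg]
    congr 1
    rw [hXdef, ← Finset.sum_neg_distrib]
    exact Finset.sum_congr rfl fun σ _ => Vm_sq hsymm σ
  rw [hS4, hG2]
  have key : ((K:ℝ) * ((K:ℝ) - 1) / (4 * (n:ℝ) * (n.factorial : ℝ))) • (-Y)
        - ((K:ℝ) * ((K:ℝ) - 1) / 2) • (-(((n.factorial : ℝ))⁻¹ • X))
      = ((K:ℝ) * ((K:ℝ) - 1) / (4 * (n:ℝ) * (n.factorial : ℝ))) • ((4:ℝ) • X - Y)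
        + lam • X := by
    rw [hlam]
    match_scalars <;> field_simp <;> ring
  rw [key]
  exact (psd_smul hc0 (comb_psd hn hsymm)).add (psd_smul hlam0 (psd_sum _ _ fun σ _ => psd_self_mul_transpose _))

section Analytic

noncomputable def Am (M : Fin n → Matrix (Fin d) (Fin d) ℝ) (η : ℝ) :
    Fin n → Matrix (Fin d) (Fin d) ℝ := fun i => 1 - η • M i

noncomputable def Pm (M : Fin n → Matrix (Fin d) (Fin d) ℝ) (η : ℝ) (σ : Equiv.Perm (Fin n)) :
    Matrix (Fin d) (Fin d) ℝ := permProd (Am M η) σ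

noncomputable def Wm (M : Fin n → Matrix (Fin d) (Fin d) ℝ) (η : ℝ) :
    Matrix (Fin d) (Fin d) ℝ :=
  ((n.factorial : ℝ))⁻¹ • ∑ σ : Equiv.Perm (Fin n), Pm M η σ

noncomputable def Dm (M : Fin n → Matrix (Fin d) (Fin d) ℝ) (η : ℝ) (σ : Equiv.Perm (Fin n)) :
    Matrix (Fin d) (Fin d) ℝ := Pm M η σ - Wm M η

noncomputable def Msum (M : Fin n → Matrix (Fin d) (Fin d) ℝ) : Matrix (Fin d) (Fin d) ℝ :=
  ∑ i, M i

lemma norm_avg_le {f : Equiv.Perm (Fin n) → Matrix (Fin d) (Fin d) ℝ} {c : ℝ}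
    (h : ∀ σ, ‖f σ‖ ≤ c) :
    ‖((n.factorial : ℝ))⁻¹ • ∑ σ : Equiv.Perm (Fin n), f σ‖ ≤ c := by
  have hfac : (0:ℝ) < (n.factorial : ℝ) := by exact_mod_cast n.factorial_pos
  rw [norm_smul, Real.norm_eq_abs, abs_of_nonneg (by positivity)]
  have h1 : ‖∑ σ : Equiv.Perm (Fin n), f σ‖ ≤ (n.factorial : ℝ) * c := by
    refine (norm_sum_le _ _).trans ?_
    calc ∑ σ : Equiv.Perm (Fin n), ‖f σ‖ ≤ ∑ _σ : Equiv.Perm (Fin n), c :=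
          Finset.sum_le_sum fun σ _ => h σ
      _ = (n.factorial : ℝ) * c := by
          rw [Finset.sum_const, Finset.card_univ, Fintype.card_perm, Fintype.card_fin,
            nsmul_eq_mul]
  calc ((n.factorial : ℝ))⁻¹ * ‖∑ σ : Equiv.Perm (Fin n), f σ‖
      ≤ ((n.factorial : ℝ))⁻¹ * ((n.factorial : ℝ) * c) := by
        apply mul_le_mul_of_nonneg_left h1 (by positivity)
    _ = c := by field_simp

lemma list_expand (L : List (Matrix (Fin d) (Fin d) ℝ)) :
    ∃ c : ℝ, 0 ≤ c ∧ ∀ η : ℝ, 0 ≤ η → η ≤ 1 →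
      ∃ E, (L.map (fun B => 1 - η • B)).prod
            = 1 - η • L.sum + η^2 • pairS L + η^3 • E ∧ ‖E‖ ≤ c := by
  induction L with
  | nil =>
    exact ⟨0, le_refl _, fun η h0 h1 => ⟨0, by simp [pairS], by simp⟩⟩
  | cons B l ih =>
    obtain ⟨c, hc, hind⟩ := ih
    refine ⟨‖B‖ * ‖pairS l‖ + c * (1 + ‖B‖), by positivity, fun η h0 h1 => ?_⟩
    obtain ⟨E, hEq, hE⟩ := hind η h0 h1
    refine ⟨E - B * pairS l - η • (B * E), ?_, ?_⟩
    · rw [List.map_cons, List.prod_cons, hEq, List.sum_cons]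
      show (1 - η • B) * _ = 1 - η • (B + l.sum) + η^2 • (B * l.sum + pairS l) + η^3 • _
      simp only [mul_sub, sub_mul, mul_add, add_mul, one_mul, mul_one,
        smul_mul_assoc, mul_smul_comm, smul_sub, smul_add, smul_smul]
      module
    · have hBP := norm_mul_le B (pairS l)
      have hBE := norm_mul_le B E
      have hsm : ‖η • (B * E)‖ = η * ‖B * E‖ := by
        rw [norm_smul, Real.norm_eq_abs, abs_of_nonneg h0]
      have t1 := norm_sub_le (E - B * pairS l) (η • (B * E))
      have t2 := norm_sub_le E (B * pairS l)
      have hBn := norm_nonneg B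
      have hEn := norm_nonneg E
      have hBEn := norm_nonneg (B * E)
      nlinarith [mul_le_mul_of_nonneg_left hE hBn,
        mul_le_mul_of_nonneg_right h1 hBEn]

lemma Pm_eq_map (M : Fin n → Matrix (Fin d) (Fin d) ℝ) (η : ℝ) (σ : Equiv.Perm (Fin n)) :
    Pm M η σ = ((List.ofFn fun i => M (σ i)).map (fun B => 1 - η • B)).prod := by
  unfold Pm permProd Am
  rw [List.map_ofFn]
  rfl

lemma Pm_expansion (M : Fin n → Matrix (Fin d) (Fin d) ℝ) :
    ∃ c : ℝ, 0 ≤ c ∧ ∀ η : ℝ, 0 ≤ η → η ≤ 1 → ∀ σ : Equiv.Perm (Fin n),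
      ∃ E, Pm M η σ = 1 - η • Msum M + η^2 • SSm M σ + η^3 • E ∧ ‖E‖ ≤ c := by
  choose cf h0f hf using fun σ : Equiv.Perm (Fin n) =>
    list_expand (List.ofFn fun i => M (σ i))
  refine ⟨∑ σ : Equiv.Perm (Fin n), cf σ, Finset.sum_nonneg (fun σ _ => h0f σ),
    fun η h0 h1 σ => ?_⟩
  obtain ⟨E, hEq, hE⟩ := hf σ η h0 h1
  refine ⟨E, ?_, hE.trans (Finset.single_le_sum (fun σ _ => h0f σ) (Finset.mem_univ σ))⟩
  rw [Pm_eq_map, hEq, List.sum_ofFn, pairS_ofFn]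
  have hsum : (∑ i, M (σ i)) = Msum M := Equiv.sum_comp σ M
  rw [hsum]
  rfl

lemma Wm_expansion (M : Fin n → Matrix (Fin d) (Fin d) ℝ) :
    ∃ c : ℝ, 0 ≤ c ∧ ∀ η : ℝ, 0 ≤ η → η ≤ 1 →
      ∃ E, Wm M η = 1 - η • Msum M + η^2 • Sbar M + η^3 • E ∧ ‖E‖ ≤ c := by
  obtain ⟨c, hc, h⟩ := Pm_expansion M
  refine ⟨c, hc, fun η h0 h1 => ?_⟩
  choose Ef hEf hEb using h η h0 h1
  refine ⟨((n.factorial : ℝ))⁻¹ • ∑ σ : Equiv.Perm (Fin n), Ef σ, ?_, norm_avg_le hEb⟩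
  unfold Wm
  rw [Finset.sum_congr rfl fun σ _ => hEf σ]
  rw [Finset.sum_add_distrib, Finset.sum_add_distrib, Finset.sum_sub_distrib]
  rw [smul_add, smul_add, smul_sub]
  rw [factorial_inv_smul, ← Finset.smul_sum (r := η), ← Finset.smul_sum (r := η^2),
    ← Finset.smul_sum (r := η^3)]
  rw [smul_comm ((n.factorial:ℝ))⁻¹ η, smul_comm ((n.factorial:ℝ))⁻¹ (η^2),
    smul_comm ((n.factorial:ℝ))⁻¹ (η^3)]
  rw [factorial_inv_smul]
  simp only [Sbar]

end Analytic

section Bounds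

variable (M : Fin n → Matrix (Fin d) (Fin d) ℝ)

lemma smul_norm_eq (k : ℕ) {η : ℝ} (h0 : 0 ≤ η) (X : Matrix (Fin d) (Fin d) ℝ) :
    ‖η^k • X‖ = η^k * ‖X‖ := by
  rw [norm_smul, Real.norm_eq_abs, abs_of_nonneg (pow_nonneg h0 k)]

lemma smul_norm_eq' {η : ℝ} (h0 : 0 ≤ η) (X : Matrix (Fin d) (Fin d) ℝ) :
    ‖η • X‖ = η * ‖X‖ := by
  rw [norm_smul, Real.norm_eq_abs, abs_of_nonneg h0]

lemma bSS : ∃ s0 : ℝ, 0 ≤ s0 ∧ (∀ σ, ‖SSm M σ‖ ≤ s0) ∧ ‖Sbar M‖ ≤ s0 ∧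
    (∀ σ, ‖Vm M σ‖ ≤ 2 * s0) := by
  refine ⟨∑ σ : Equiv.Perm (Fin n), ‖SSm M σ‖, by positivity, fun σ =>
    Finset.single_le_sum (fun σ _ => norm_nonneg _) (Finset.mem_univ σ), ?_, fun σ => ?_⟩
  · exact norm_avg_le fun σ =>
      Finset.single_le_sum (fun σ _ => norm_nonneg _) (Finset.mem_univ σ)
  · unfold Vm
    refine (norm_sub_le _ _).trans ?_
    have h1 := Finset.single_le_sum (f := fun σ => ‖SSm M σ‖)
      (fun σ _ => norm_nonneg _) (Finset.mem_univ σ)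
    have h2 : ‖Sbar M‖ ≤ ∑ σ : Equiv.Perm (Fin n), ‖SSm M σ‖ := norm_avg_le fun σ =>
      Finset.single_le_sum (fun σ _ => norm_nonneg _) (Finset.mem_univ σ)
    linarith

lemma bW1 : ∃ c : ℝ, 0 ≤ c ∧ ∀ η : ℝ, 0 ≤ η → η ≤ 1 → ‖Wm M η - 1‖ ≤ c * η := by
  obtain ⟨c, hc, h⟩ := Wm_expansion M
  obtain ⟨s0, hs0, hSS, hSb, hV⟩ := bSS M
  refine ⟨‖Msum M‖ + s0 + c, by positivity, fun η h0 h1 => ?_⟩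
  obtain ⟨E, hEq, hE⟩ := h η h0 h1
  have hre : Wm M η - 1 = -(η • Msum M) + η^2 • Sbar M + η^3 • E := by
    rw [hEq]; abel
  rw [hre]
  refine ((norm_add_le _ _).trans (add_le_add (norm_add_le _ _) le_rfl)).trans ?_
  rw [norm_neg, smul_norm_eq' h0, smul_norm_eq 2 h0, smul_norm_eq 3 h0]
  have e2 : η^2 ≤ η := by nlinarith
  have e3 : η^3 ≤ η := by nlinarith
  have hEn := norm_nonneg E
  have hMn := norm_nonneg (Msum M)
  nlinarith [mul_le_mul e2 hSb (norm_nonneg _) h0, mul_le_mul e3 hE (norm_nonneg _) h0]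

lemma bW : ∃ c : ℝ, 0 ≤ c ∧ ∀ η : ℝ, 0 ≤ η → η ≤ 1 → ‖Wm M η‖ ≤ c := by
  obtain ⟨c, hc, h⟩ := bW1 M
  refine ⟨‖(1 : Matrix (Fin d) (Fin d) ℝ)‖ + c, by positivity, fun η h0 h1 => ?_⟩
  have h2 := h η h0 h1
  have h3 : ‖Wm M η‖ ≤ ‖Wm M η - 1‖ + ‖(1 : Matrix (Fin d) (Fin d) ℝ)‖ := by
    have := norm_add_le (Wm M η - 1) (1 : Matrix (Fin d) (Fin d) ℝ)
    simpa using this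
  nlinarith [mul_le_mul_of_nonneg_left h1 hc]

lemma bWpow : ∀ k : ℕ, ∃ c : ℝ, 0 ≤ c ∧ ∀ η : ℝ, 0 ≤ η → η ≤ 1 → ‖(Wm M η)^k‖ ≤ c := by
  intro k
  induction k with
  | zero => exact ⟨‖(1 : Matrix (Fin d) (Fin d) ℝ)‖, norm_nonneg _, fun η h0 h1 => by simp⟩
  | succ m ih =>
    obtain ⟨c, hc, h⟩ := ih
    obtain ⟨cw, hcw, hw⟩ := bW M
    refine ⟨c * cw, by positivity, fun η h0 h1 => ?_⟩
    rw [pow_succ]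
    refine (norm_mul_le _ _).trans ?_
    have h1' := h η h0 h1
    have h2' := hw η h0 h1
    nlinarith [norm_nonneg ((Wm M η)^m), norm_nonneg (Wm M η)]

lemma bWpow1 : ∀ k : ℕ, ∃ c : ℝ, 0 ≤ c ∧ ∀ η : ℝ, 0 ≤ η → η ≤ 1 →
    ‖(Wm M η)^k - 1‖ ≤ c * η := by
  intro k
  induction k with
  | zero => exact ⟨0, le_refl _, fun η h0 h1 => by simp⟩
  | succ m ih =>
    obtain ⟨c, hc, h⟩ := ih
    obtain ⟨cw, hcw, hw⟩ := bW M
    obtain ⟨c1, hc1, h1w⟩ := bW1 M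
    refine ⟨c * cw + c1, by positivity, fun η h0 h1 => ?_⟩
    have hre : (Wm M η)^(m+1) - 1 = ((Wm M η)^m - 1) * Wm M η + (Wm M η - 1) := by
      rw [pow_succ]; noncomm_ring
    rw [hre]
    refine (norm_add_le _ _).trans ?_
    refine (add_le_add (norm_mul_le _ _) (h1w η h0 h1)).trans ?_
    have ha := h η h0 h1
    have hb := hw η h0 h1
    have hp := norm_nonneg ((Wm M η)^m - 1)
    have hq := norm_nonneg (Wm M η)
    nlinarith [mul_le_mul ha hb hq (by positivity : (0:ℝ) ≤ c * η)]

lemma bDV : ∃ c : ℝ, 0 ≤ c ∧ ∀ η : ℝ, 0 ≤ η → η ≤ 1 → ∀ σ,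
    ‖Dm M η σ - η^2 • Vm M σ‖ ≤ c * η^3 := by
  obtain ⟨cP, hcP, hP⟩ := Pm_expansion M
  obtain ⟨cW, hcW, hW⟩ := Wm_expansion M
  refine ⟨cP + cW, by positivity, fun η h0 h1 σ => ?_⟩
  obtain ⟨E1, hEq1, hE1⟩ := hP η h0 h1 σ
  obtain ⟨E2, hEq2, hE2⟩ := hW η h0 h1
  have hre : Dm M η σ - η^2 • Vm M σ = η^3 • E1 - η^3 • E2 := by
    unfold Dm Vm
    rw [hEq1, hEq2]
    rw [smul_sub]
    abel
  rw [hre]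
  refine (norm_sub_le _ _).trans ?_
  rw [smul_norm_eq 3 h0, smul_norm_eq 3 h0]
  have h3 := pow_nonneg h0 3
  nlinarith [mul_le_mul_of_nonneg_left hE1 h3, mul_le_mul_of_nonneg_left hE2 h3]

lemma bD : ∃ c : ℝ, 0 ≤ c ∧ ∀ η : ℝ, 0 ≤ η → η ≤ 1 → ∀ σ,
    ‖Dm M η σ‖ ≤ c * η^2 := by
  obtain ⟨c, hc, h⟩ := bDV M
  obtain ⟨s0, hs0, hSS, hSb, hV⟩ := bSS M
  refine ⟨c + 2 * s0, by positivity, fun η h0 h1 σ => ?_⟩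
  have h2 := h η h0 h1 σ
  have h3 : ‖Dm M η σ‖ ≤ ‖Dm M η σ - η^2 • Vm M σ‖ + ‖η^2 • Vm M σ‖ := by
    have := norm_add_le (Dm M η σ - η^2 • Vm M σ) (η^2 • Vm M σ)
    simpa using this
  rw [smul_norm_eq 2 h0] at h3
  have e3 : η^3 ≤ η^2 := by nlinarith
  have h4 := hV σ
  have h5 := pow_nonneg h0 2
  nlinarith [mul_le_mul_of_nonneg_left h4 h5, mul_le_mul_of_nonneg_right e3 hc]

lemma sumD (η : ℝ) : ∑ σ : Equiv.Perm (Fin n), Dm M η σ = 0 := by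
  unfold Dm Wm
  rw [Finset.sum_sub_distrib, Finset.sum_const, Finset.card_univ, Fintype.card_perm,
    Fintype.card_fin, ← Nat.cast_smul_eq_nsmul ℝ, smul_smul, mul_inv_cancel₀, one_smul,
    sub_self]
  exact_mod_cast n.factorial_ne_zero

end Bounds

section LK

variable (M : Fin n → Matrix (Fin d) (Fin d) ℝ)

lemma norm_mul_le_of {a b : Matrix (Fin d) (Fin d) ℝ} {ca cb : ℝ}
    (ha : ‖a‖ ≤ ca) (hb : ‖b‖ ≤ cb) : ‖a * b‖ ≤ ca * cb :=
  (norm_mul_le a b).trans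
    (mul_le_mul ha hb (norm_nonneg _) ((norm_nonneg a).trans ha))

noncomputable def Lk (M : Fin n → Matrix (Fin d) (Fin d) ℝ) (η : ℝ) (k : ℕ)
    (σ : Equiv.Perm (Fin n)) : Matrix (Fin d) (Fin d) ℝ :=
  ∑ j ∈ Finset.range k, (Wm M η)^j * Dm M η σ * (Wm M η)^(k-1-j)

lemma Lk_succ (η : ℝ) (k : ℕ) (σ : Equiv.Perm (Fin n)) :
    Lk M η (k+1) σ = Lk M η k σ * Wm M η + (Wm M η)^k * Dm M η σ := by
  unfold Lk
  rw [Finset.sum_range_succ, Finset.sum_mul]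
  congr 1
  · refine Finset.sum_congr rfl fun j hj => ?_
    have hj' : j < k := Finset.mem_range.1 hj
    rw [show (k+1) - 1 - j = (k - 1 - j) + 1 by omega, pow_succ]
    noncomm_ring
  · rw [show (k+1) - 1 - k = 0 by omega, pow_zero, mul_one]

lemma sumLk (η : ℝ) (k : ℕ) : ∑ σ : Equiv.Perm (Fin n), Lk M η k σ = 0 := by
  unfold Lk
  rw [Finset.sum_comm]
  refine Finset.sum_eq_zero fun j _ => ?_
  have : ∀ σ : Equiv.Perm (Fin n), (Wm M η)^j * Dm M η σ * (Wm M η)^(k-1-j)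
      = (Wm M η)^j * (Dm M η σ * (Wm M η)^(k-1-j)) := fun σ => by rw [mul_assoc]
  rw [Finset.sum_congr rfl fun σ _ => this σ, ← Finset.mul_sum, ← Finset.sum_mul, sumD,
    zero_mul, mul_zero]

lemma bLk (k : ℕ) : ∃ c : ℝ, 0 ≤ c ∧ ∀ η : ℝ, 0 ≤ η → η ≤ 1 → ∀ σ,
    ‖Lk M η k σ‖ ≤ c * η^2 := by
  induction k with
  | zero => exact ⟨0, le_refl _, fun η h0 h1 σ => by simp [Lk]⟩
  | succ m ih =>
    obtain ⟨c, hc, h⟩ := ih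
    obtain ⟨cw, hcw, hw⟩ := bW M
    obtain ⟨cwk, hcwk, hwk⟩ := bWpow M m
    obtain ⟨cD, hcD, hD⟩ := bD M
    refine ⟨c * cw + cwk * cD, by positivity, fun η h0 h1 σ => ?_⟩
    rw [Lk_succ]
    refine (norm_add_le _ _).trans ?_
    have t1 : ‖Lk M η m σ * Wm M η‖ ≤ (c * η^2) * cw :=
      norm_mul_le_of (h η h0 h1 σ) (hw η h0 h1)
    have t2 : ‖(Wm M η)^m * Dm M η σ‖ ≤ cwk * (cD * η^2) :=
      norm_mul_le_of (hwk η h0 h1) (hD η h0 h1 σ)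
    nlinarith

lemma bP : ∃ c : ℝ, 0 ≤ c ∧ ∀ η : ℝ, 0 ≤ η → η ≤ 1 → ∀ σ, ‖Pm M η σ‖ ≤ c := by
  obtain ⟨cw, hcw, hw⟩ := bW M
  obtain ⟨cD, hcD, hD⟩ := bD M
  refine ⟨cw + cD, by positivity, fun η h0 h1 σ => ?_⟩
  have hPm : Pm M η σ = Wm M η + Dm M η σ := by unfold Dm; abel
  rw [hPm]
  refine (norm_add_le _ _).trans ?_
  have := hD η h0 h1 σ
  have := hw η h0 h1
  have e2 : η^2 ≤ 1 := by nlinarith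
  nlinarith [mul_le_mul_of_nonneg_left e2 hcD]

lemma bRk (k : ℕ) : ∃ c : ℝ, 0 ≤ c ∧ ∀ η : ℝ, 0 ≤ η → η ≤ 1 → ∀ σ,
    ‖(Pm M η σ)^k - (Wm M η)^k - Lk M η k σ‖ ≤ c * η^4 := by
  induction k with
  | zero => exact ⟨0, le_refl _, fun η h0 h1 σ => by simp [Lk]⟩
  | succ m ih =>
    obtain ⟨c, hc, h⟩ := ih
    obtain ⟨cL, hcL, hL⟩ := bLk M m
    obtain ⟨cD, hcD, hD⟩ := bD M
    obtain ⟨cP, hcP, hP⟩ := bP M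
    refine ⟨cL * cD + c * cP, by positivity, fun η h0 h1 σ => ?_⟩
    have hre : (Pm M η σ)^(m+1) - (Wm M η)^(m+1) - Lk M η (m+1) σ
        = Lk M η m σ * Dm M η σ
          + ((Pm M η σ)^m - (Wm M η)^m - Lk M η m σ) * Pm M η σ := by
      rw [Lk_succ, pow_succ, pow_succ]
      have hDm : Dm M η σ = Pm M η σ - Wm M η := rfl
      rw [hDm]
      noncomm_ring
    rw [hre]
    refine (norm_add_le _ _).trans ?_
    have t1 : ‖Lk M η m σ * Dm M η σ‖ ≤ (cL * η^2) * (cD * η^2) :=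
      norm_mul_le_of (hL η h0 h1 σ) (hD η h0 h1 σ)
    have t2 : ‖((Pm M η σ)^m - (Wm M η)^m - Lk M η m σ) * Pm M η σ‖ ≤ (c * η^4) * cP :=
      norm_mul_le_of (h η h0 h1 σ) (hP η h0 h1 σ)
    nlinarith

end LK

section Mid

variable (M : Fin n → Matrix (Fin d) (Fin d) ℝ)

lemma bG2 : ∃ c : ℝ, 0 ≤ c ∧ ‖G2 M‖ ≤ c := by
  obtain ⟨s0, hs0, hSS, hSb, hV⟩ := bSS M
  refine ⟨(2*s0) * (2*s0), by positivity, ?_⟩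
  unfold G2
  refine norm_avg_le fun σ => ?_
  rw [sq]
  exact norm_mul_le_of (hV σ) (hV σ)

lemma bTerm (j l : ℕ) : ∃ c : ℝ, 0 ≤ c ∧ ∀ η : ℝ, 0 ≤ η → η ≤ 1 → ∀ σ,
    ‖(Wm M η)^j * Dm M η σ * (Wm M η)^l * Dm M η σ - η^4 • (Vm M σ)^2‖ ≤ c * η^5 := by
  obtain ⟨cj, hcj, hj⟩ := bWpow1 M j
  obtain ⟨cl, hcl, hl⟩ := bWpow1 M l
  obtain ⟨cWj, hcWj, hWj⟩ := bWpow M j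
  obtain ⟨cWl, hcWl, hWl⟩ := bWpow M l
  obtain ⟨cD, hcD, hD⟩ := bD M
  obtain ⟨cDV, hcDV, hDV⟩ := bDV M
  obtain ⟨s0, hs0, hSS, hSb, hV⟩ := bSS M
  refine ⟨cj*(cD*cWl*cD) + cD*(cl*cD) + cD*cDV + cDV*(2*s0),
    by positivity, fun η h0 h1 σ => ?_⟩
  set W := Wm M η
  set D := Dm M η σ
  set V' := η^2 • Vm M σ with hV'
  have hVV : V' * V' = η^4 • (Vm M σ)^2 := by
    rw [hV', smul_mul_assoc, mul_smul_comm, smul_smul,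
      show (Vm M σ) * (Vm M σ) = (Vm M σ)^2 from (sq (Vm M σ)).symm,
      show η^2*η^2 = η^4 by ring]
  have hid : W^j * D * W^l * D - η^4 • (Vm M σ)^2
      = (W^j - 1) * (D * W^l * D) + D * ((W^l - 1) * D)
        + D * (D - V') + (D - V') * V' := by
    rw [← hVV]
    noncomm_ring
  rw [hid]
  have hVn : ‖V'‖ ≤ (2*s0) * η^2 := by
    rw [hV', smul_norm_eq 2 h0]
    nlinarith [hV σ, pow_nonneg h0 2]
  have t1 : ‖(W^j - 1) * (D * W^l * D)‖ ≤ (cj*η) * ((cD*η^2) * cWl * (cD*η^2)) :=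
    norm_mul_le_of (hj η h0 h1)
      (norm_mul_le_of (norm_mul_le_of (hD η h0 h1 σ) (hWl η h0 h1)) (hD η h0 h1 σ))
  have t2 : ‖D * ((W^l - 1) * D)‖ ≤ (cD*η^2) * ((cl*η) * (cD*η^2)) :=
    norm_mul_le_of (hD η h0 h1 σ) (norm_mul_le_of (hl η h0 h1) (hD η h0 h1 σ))
  have t3 : ‖D * (D - V')‖ ≤ (cD*η^2) * (cDV*η^3) :=
    norm_mul_le_of (hD η h0 h1 σ) (hDV η h0 h1 σ)
  have t4 : ‖(D - V') * V'‖ ≤ (cDV*η^3) * ((2*s0)*η^2) :=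
    norm_mul_le_of (hDV η h0 h1 σ) hVn
  have e1 : (cj*η) * ((cD*η^2) * cWl * (cD*η^2)) = (cj*(cD*cWl*cD)) * η^5 := by ring
  have e2 : (cD*η^2) * ((cl*η) * (cD*η^2)) = (cD*(cl*cD)) * η^5 := by ring
  have e3 : (cD*η^2) * (cDV*η^3) = (cD*cDV) * η^5 := by ring
  have e4 : (cDV*η^3) * ((2*s0)*η^2) = (cDV*(2*s0)) * η^5 := by ring
  rw [e1] at t1; rw [e2] at t2; rw [e3] at t3; rw [e4] at t4
  calc ‖_ + _ + _ + _‖ ≤ ‖(W^j - 1) * (D * W^l * D) + D * ((W^l - 1) * D) + D * (D - V')‖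
        + ‖(D - V') * V'‖ := norm_add_le _ _
    _ ≤ (‖(W^j - 1) * (D * W^l * D) + D * ((W^l - 1) * D)‖ + ‖D * (D - V')‖)
        + ‖(D - V') * V'‖ := by gcongr; exact norm_add_le _ _
    _ ≤ ((‖(W^j - 1) * (D * W^l * D)‖ + ‖D * ((W^l - 1) * D)‖) + ‖D * (D - V')‖)
        + ‖(D - V') * V'‖ := by gcongr; exact norm_add_le _ _
    _ ≤ _ := by rw [add_mul, add_mul, add_mul]; linarith

lemma bMid (k : ℕ) : ∃ c : ℝ, 0 ≤ c ∧ ∀ η : ℝ, 0 ≤ η → η ≤ 1 →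
    ‖((n.factorial : ℝ))⁻¹ • (∑ σ : Equiv.Perm (Fin n), Lk M η k σ * Dm M η σ)
      - ((k:ℝ) * η^4) • G2 M‖ ≤ c * η^5 := by
  choose cf hcf hf using fun j : ℕ => bTerm M j (k-1-j)
  refine ⟨∑ j ∈ Finset.range k, cf j, Finset.sum_nonneg fun j _ => hcf j,
    fun η h0 h1 => ?_⟩
  have hG2 : ((k:ℝ) * η^4) • G2 M = ((n.factorial : ℝ))⁻¹ •
      ∑ σ : Equiv.Perm (Fin n), ∑ j ∈ Finset.range k, η^4 • (Vm M σ)^2 := by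
    unfold G2
    rw [smul_comm ((k:ℝ) * η^4) _]
    congr 1
    rw [Finset.smul_sum]
    refine Finset.sum_congr rfl fun σ _ => ?_
    rw [Finset.sum_const, Finset.card_range, ← Nat.cast_smul_eq_nsmul ℝ, smul_smul]
  have hL : ∀ σ, Lk M η k σ * Dm M η σ
      = ∑ j ∈ Finset.range k, (Wm M η)^j * Dm M η σ * (Wm M η)^(k-1-j) * Dm M η σ := by
    intro σ; unfold Lk; rw [Finset.sum_mul]
  have hre : ((n.factorial : ℝ))⁻¹ • (∑ σ : Equiv.Perm (Fin n), Lk M η k σ * Dm M η σ)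
      - ((k:ℝ) * η^4) • G2 M
      = ((n.factorial : ℝ))⁻¹ • ∑ σ : Equiv.Perm (Fin n),
          (∑ j ∈ Finset.range k,
            ((Wm M η)^j * Dm M η σ * (Wm M η)^(k-1-j) * Dm M η σ - η^4 • (Vm M σ)^2)) := by
    rw [hG2, ← smul_sub, ← Finset.sum_sub_distrib]
    congr 1
    refine Finset.sum_congr rfl fun σ _ => ?_
    rw [hL, ← Finset.sum_sub_distrib]
  rw [hre]
  refine norm_avg_le fun σ => ?_
  refine (norm_sum_le _ _).trans ?_
  rw [Finset.sum_mul]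
  exact Finset.sum_le_sum fun j hj => hf j η h0 h1 σ

end Mid

lemma ak_nonneg (k : ℕ) : 0 ≤ (k:ℝ)*((k:ℝ)-1)/2 := by
  rcases Nat.eq_zero_or_pos k with h|h
  · simp [h]
  · have h2 : (1:ℝ) ≤ (k:ℝ) := by exact_mod_cast h
    nlinarith

lemma main_claim (M : Fin n → Matrix (Fin d) (Fin d) ℝ) (k : ℕ) :
    ∃ c : ℝ, 0 ≤ c ∧ ∀ η : ℝ, 0 ≤ η → η ≤ 1 →
    ‖((n.factorial : ℝ))⁻¹ • (∑ σ : Equiv.Perm (Fin n), (Pm M η σ)^k) - (Wm M η)^k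
      - ((k:ℝ) * ((k:ℝ)-1)/2 * η^4) • G2 M‖ ≤ c * η^5 := by
  induction k with
  | zero =>
    refine ⟨0, le_refl _, fun η h0 h1 => ?_⟩
    simp only [pow_zero, Nat.cast_zero, factorial_inv_smul]
    norm_num
  | succ m ih =>
    obtain ⟨c, hc, hih⟩ := ih
    obtain ⟨cw, hcw, hw⟩ := bW M
    obtain ⟨cR, hcR, hR⟩ := bRk M m
    obtain ⟨cD, hcD, hD⟩ := bD M
    obtain ⟨cM, hcM, hM⟩ := bMid M m
    obtain ⟨cG, hcG, hG⟩ := bG2 M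
    obtain ⟨c1, hc1, h1w⟩ := bW1 M
    have ham : 0 ≤ (m:ℝ)*((m:ℝ)-1)/2 := ak_nonneg m
    refine ⟨c*cw + ((m:ℝ)*((m:ℝ)-1)/2)*(cG*c1) + cR*cD + cM, by positivity,
      fun η h0 h1 => ?_⟩
    have hsum : ∑ σ : Equiv.Perm (Fin n), (Pm M η σ)^(m+1)
        = (∑ σ : Equiv.Perm (Fin n), (Pm M η σ)^m) * Wm M η
          + ∑ σ : Equiv.Perm (Fin n),
              ((Pm M η σ)^m - (Wm M η)^m - Lk M η m σ) * Dm M η σ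
          + ∑ σ : Equiv.Perm (Fin n), Lk M η m σ * Dm M η σ := by
      have hper : ∀ σ : Equiv.Perm (Fin n), (Pm M η σ)^(m+1)
          = (Pm M η σ)^m * Wm M η
            + ((Pm M η σ)^m - (Wm M η)^m - Lk M η m σ) * Dm M η σ
            + Lk M η m σ * Dm M η σ + (Wm M η)^m * Dm M η σ := by
        intro σ
        have hDm : Dm M η σ = Pm M η σ - Wm M η := rfl
        rw [pow_succ, hDm]
        noncomm_ring
      rw [Finset.sum_congr rfl fun σ _ => hper σ, Finset.sum_add_distrib,
        Finset.sum_add_distrib, Finset.sum_add_distrib, ← Finset.sum_mul, ← Finset.mul_sum,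
        sumD, mul_zero, add_zero]
    have hre : ((n.factorial : ℝ))⁻¹ • (∑ σ : Equiv.Perm (Fin n), (Pm M η σ)^(m+1))
          - (Wm M η)^(m+1)
          - (((m+1:ℕ):ℝ) * (((m+1:ℕ):ℝ)-1)/2 * η^4) • G2 M
        = (((n.factorial : ℝ))⁻¹ • (∑ σ : Equiv.Perm (Fin n), (Pm M η σ)^m) - (Wm M η)^m
            - ((m:ℝ) * ((m:ℝ)-1)/2 * η^4) • G2 M) * Wm M η
          + ((m:ℝ)*((m:ℝ)-1)/2 * η^4) • (G2 M * (Wm M η - 1))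
          + ((n.factorial : ℝ))⁻¹ • (∑ σ : Equiv.Perm (Fin n),
              ((Pm M η σ)^m - (Wm M η)^m - Lk M η m σ) * Dm M η σ)
          + (((n.factorial : ℝ))⁻¹ • (∑ σ : Equiv.Perm (Fin n), Lk M η m σ * Dm M η σ)
              - ((m:ℝ) * η^4) • G2 M) := by
      rw [hsum]
      push_cast
      simp only [smul_add, sub_mul, smul_mul_assoc, mul_sub, mul_one, pow_succ]
      module
    rw [hre]
    have t1 : ‖(((n.factorial : ℝ))⁻¹ • (∑ σ : Equiv.Perm (Fin n), (Pm M η σ)^m)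
        - (Wm M η)^m - ((m:ℝ) * ((m:ℝ)-1)/2 * η^4) • G2 M) * Wm M η‖
        ≤ (c * η^5) * cw := norm_mul_le_of (hih η h0 h1) (hw η h0 h1)
    have t2 : ‖((m:ℝ)*((m:ℝ)-1)/2 * η^4) • (G2 M * (Wm M η - 1))‖
        ≤ ((m:ℝ)*((m:ℝ)-1)/2 * η^4) * (cG * (c1 * η)) := by
      rw [norm_smul, Real.norm_eq_abs, abs_of_nonneg (by positivity)]
      have := norm_mul_le_of hG (h1w η h0 h1)
      apply mul_le_mul_of_nonneg_left this (by positivity)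
    have t3 : ‖((n.factorial : ℝ))⁻¹ • (∑ σ : Equiv.Perm (Fin n),
        ((Pm M η σ)^m - (Wm M η)^m - Lk M η m σ) * Dm M η σ)‖
        ≤ (cR * η^4) * (cD * η^2) :=
      norm_avg_le fun σ => norm_mul_le_of (hR η h0 h1 σ) (hD η h0 h1 σ)
    have t4 := hM η h0 h1
    have hch : ‖_ + _ + _ + _‖ ≤ _ :=
      (norm_add_le _ _).trans (add_le_add
        ((norm_add_le _ _).trans (add_le_add ((norm_add_le _ _).trans (add_le_add t1 t2)) t3))
        t4)
    refine hch.trans ?_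
    have e6 : η^4 * η^2 ≤ η^5 := by nlinarith [pow_nonneg h0 5]
    nlinarith [mul_le_mul_of_nonneg_left e6 (mul_nonneg hcR hcD), pow_nonneg h0 5,
      pow_nonneg h0 4]

section Symmetry

variable (M : Fin n → Matrix (Fin d) (Fin d) ℝ)

lemma reverse_ofFn {α : Type*} {k : ℕ} (f : Fin k → α) :
    (List.ofFn f).reverse = List.ofFn (fun i => f i.rev) := by
  apply List.ext_getElem
  · simp
  · intro i h1 h2
    rw [List.getElem_reverse, List.getElem_ofFn, List.getElem_ofFn]
    congr 1
    simp only [List.length_reverse, List.length_ofFn] at h1 h2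
    ext
    simp only [Fin.rev]
    simp only [List.length_ofFn]
    omega

lemma Pm_transpose (hsymm : ∀ i, (M i).IsSymm) (η : ℝ) (σ : Equiv.Perm (Fin n)) :
    (Pm M η σ)ᵀ = Pm M η (σ * Fin.revPerm) := by
  unfold Pm permProd
  rw [Matrix.transpose_list_prod, List.map_ofFn]
  have h1 : (Matrix.transpose ∘ fun i => Am M η (σ i)) = fun i => Am M η (σ i) := by
    funext i
    simp only [Function.comp_apply]
    unfold Am
    rw [Matrix.transpose_sub, Matrix.transpose_one, Matrix.transpose_smul, (hsymm _).eq]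
  rw [h1, reverse_ofFn]
  congr 1

lemma sum_pow_transpose (hsymm : ∀ i, (M i).IsSymm) (η : ℝ) (k : ℕ) :
    (∑ σ : Equiv.Perm (Fin n), (Pm M η σ)^k)ᵀ
      = ∑ σ : Equiv.Perm (Fin n), (Pm M η σ)^k := by
  rw [Matrix.transpose_sum]
  have h1 : ∀ σ, ((Pm M η σ)^k)ᵀ = (Pm M η (σ * Fin.revPerm))^k := by
    intro σ; rw [Matrix.transpose_pow, Pm_transpose M hsymm]
  rw [Finset.sum_congr rfl fun σ _ => h1 σ]
  exact Fintype.sum_equiv (Equiv.mulRight Fin.revPerm) _ _ (fun σ => rfl)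

lemma Wm_transpose (hsymm : ∀ i, (M i).IsSymm) (η : ℝ) : (Wm M η)ᵀ = Wm M η := by
  unfold Wm
  rw [Matrix.transpose_smul]
  congr 1
  rw [Matrix.transpose_sum, Finset.sum_congr rfl fun σ _ => Pm_transpose M hsymm η σ]
  exact Fintype.sum_equiv (Equiv.mulRight Fin.revPerm) _ _ (fun σ => rfl)

lemma G2_transpose (hsymm : ∀ i, (M i).IsSymm) : (G2 M)ᵀ = G2 M := by
  unfold G2
  rw [Matrix.transpose_smul]
  congr 1
  rw [Matrix.transpose_sum]
  refine Finset.sum_congr rfl fun σ _ => ?_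
  rw [Matrix.transpose_pow, Vm_transpose hsymm]
  exact neg_sq _

end Symmetry

section PSDnorm

lemma psd_smul_one_sub {F : Matrix (Fin d) (Fin d) ℝ} (hF : Fᵀ = F) {a : ℝ}
    (hFa : ‖F‖ ≤ a) : (a • 1 - F).PosSemidef := by
  rw [Matrix.posSemidef_iff_dotProduct_mulVec]
  constructor
  · show (a • (1 : Matrix (Fin d) (Fin d) ℝ) - F)ᴴ = a • 1 - F
    rw [real_conjT, Matrix.transpose_sub, Matrix.transpose_smul, Matrix.transpose_one, hF]
  · intro x
    have hsx : star x = x := by funext i; simp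
    rw [hsx, Matrix.sub_mulVec, Matrix.smul_mulVec, Matrix.one_mulVec,
      dotProduct_sub, dotProduct_smul]
    set y : EuclideanSpace ℝ (Fin d) := (EuclideanSpace.equiv (Fin d) ℝ).symm x with hy
    set z : EuclideanSpace ℝ (Fin d) := (EuclideanSpace.equiv (Fin d) ℝ).symm (F.mulVec x)
      with hz
    have hxx : dotProduct x x = ‖y‖^2 := by
      rw [EuclideanSpace.norm_eq, Real.sq_sqrt (by positivity)]
      unfold dotProduct
      refine Finset.sum_congr rfl fun i _ => ?_
      have : y i = x i := rfl
      rw [this]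
      rw [Real.norm_eq_abs, sq_abs, sq]
    have hinner : dotProduct x (F.mulVec x) = inner (𝕜 := ℝ) y z := by
      rw [PiLp.inner_apply]
      unfold dotProduct
      refine Finset.sum_congr rfl fun i _ => ?_
      have h1 : y i = x i := rfl
      have h2 : z i = F.mulVec x i := rfl
      rw [h1, h2, RCLike.inner_apply, conj_trivial, mul_comm]
    have hnz : ‖z‖ ≤ ‖F‖ * ‖y‖ := Matrix.l2_opNorm_mulVec F y
    have hcs := real_inner_le_norm y z
    rw [hinner, smul_eq_mul, hxx]
    have hyn := norm_nonneg y
    have hzn := norm_nonneg z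
    have hFn := (norm_nonneg F).trans hFa
    nlinarith
end PSDnorm

end St4

/-- For n ≥ 2, K ≥ 1 and symmetric M_1,…,M_n, there exist C ≥ 0 and η₀ > 0 such
that for every η ∈ [0,η₀], with A_i = I - η M_i,
W_RS - W_SS ⪰ -(η⁴K(K-1)/(4n·n!)) Σ_{i≠j} (M_iM_j - M_jM_i)² - Cη⁵ I. -/
theorem statement4 (n K d : ℕ) (hn : 2 ≤ n) (hK : 1 ≤ K)
    (M : Fin n → Matrix (Fin d) (Fin d) ℝ) (hsymm : ∀ i, (M i).IsSymm) :
    ∃ C : ℝ, 0 ≤ C ∧ ∃ η₀ : ℝ, 0 < η₀ ∧ ∀ η ∈ Set.Icc (0 : ℝ) η₀,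
      (WRS n K (fun i => 1 - η • M i) - WSS n K (fun i => 1 - η • M i)
        + (η ^ 4 * (K : ℝ) * ((K : ℝ) - 1) / (4 * (n : ℝ) * (n.factorial : ℝ))) •
            (∑ i : Fin n, ∑ j : Fin n, if i ≠ j then (M i * M j - M j * M i) ^ 2 else 0)
        + (C * η ^ 5) • (1 : Matrix (Fin d) (Fin d) ℝ)).PosSemidef := by
  classical
  obtain ⟨cF, hcF, hF⟩ := St4.main_claim M K
  refine ⟨cF, hcF, 1, one_pos, fun η hη => ?_⟩
  obtain ⟨h0, h1⟩ := hη
  have hWSS : WSS n K (fun i => 1 - η • M i)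
      = ((n.factorial:ℝ))⁻¹ • ∑ σ : Equiv.Perm (Fin n), (St4.Pm M η σ)^K := rfl
  have hWRS : WRS n K (fun i => 1 - η • M i) = (St4.Wm M η)^K := rfl
  have hFb := hF η h0 h1
  set Fm := ((n.factorial : ℝ))⁻¹ • (∑ σ : Equiv.Perm (Fin n), (St4.Pm M η σ)^K)
      - (St4.Wm M η)^K - ((K:ℝ) * ((K:ℝ)-1)/2 * η^4) • St4.G2 M with hFm
  have hFt : Fmᵀ = Fm := by
    rw [hFm]
    rw [Matrix.transpose_sub, Matrix.transpose_sub, Matrix.transpose_smul,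
      St4.sum_pow_transpose M hsymm η K, Matrix.transpose_smul, St4.G2_transpose M hsymm,
      Matrix.transpose_pow, St4.Wm_transpose M hsymm η]
  have hkey := St4.final_comb (M := M) K hn hK hsymm
  have hCm : (∑ i : Fin n, ∑ j : Fin n, if i ≠ j then (M i * M j - M j * M i) ^ 2 else 0)
      = (∑ i : Fin n, ∑ j : Fin n, if i ≠ j then (St4.Cm M i j)^2 else 0) := rfl
  have hgoal : (WRS n K (fun i => 1 - η • M i) - WSS n K (fun i => 1 - η • M i)
        + (η ^ 4 * (K : ℝ) * ((K : ℝ) - 1) / (4 * (n : ℝ) * (n.factorial : ℝ))) •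
            (∑ i : Fin n, ∑ j : Fin n, if i ≠ j then (M i * M j - M j * M i) ^ 2 else 0)
        + (cF * η ^ 5) • (1 : Matrix (Fin d) (Fin d) ℝ))
      = η^4 • ((((K:ℝ) * ((K:ℝ) - 1) / (4 * (n:ℝ) * (n.factorial : ℝ))) •
            (∑ i : Fin n, ∑ j : Fin n, if i ≠ j then (St4.Cm M i j)^2 else 0))
          - ((K:ℝ) * ((K:ℝ)-1)/2) • St4.G2 M)
        + ((cF * η^5) • (1 : Matrix (Fin d) (Fin d) ℝ) - Fm) := by
    rw [hWRS, hWSS, hFm, hCm]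
    match_scalars <;> ring
  rw [hgoal]
  exact (St4.psd_smul (pow_nonneg h0 4) hkey).add (St4.psd_smul_one_sub hFt hFb)
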